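/- For a continuous function h:[0,1]→ℝ and integer n ≥ 1, the quantity ∫₀¹∫₀¹ Kₙ(r,s) h(r) h(s) r s ds dr, where Kₙ(r,s) = (1/(2n)) ((r/s)^n 1_{r≤s} + (s/r)^n 1_{s≤r}), equals (1/(2n)) (∫₀¹ h(r) r^{1+n} dr)² + ∫₀¹ r^{−2n−1} (∫₀ʳ s^{n+1} h(s) ds)² dr, and hence is nonnegative; it is strictly positive if h is not identically zero. -/

import Mathlib

open MeasureTheory Set intervalIntegral Filter

variable {h : ℝ → ℝ} {n : ℕ} {C : ℝ}

lemma my_bdd_int {f : ℝ → ℝ} {C : ℝ} (hf : ContinuousOn f (Ioc 0 1))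
    (hb : ∀ r ∈ Ioc (0:ℝ) 1, |f r| ≤ C) : IntervalIntegrable f volume 0 1 := by
  rw [intervalIntegrable_iff_integrableOn_Ioc_of_le zero_le_one]
  refine ⟨hf.aestronglyMeasurable measurableSet_Ioc,
    HasFiniteIntegral.restrict_of_bounded (C := C) measure_Ioc_lt_top ?_⟩
  rw [ae_restrict_iff' measurableSet_Ioc]
  exact Filter.Eventually.of_forall (fun x hx => hb x hx)

lemma my_congr_Ioo {f g : ℝ → ℝ} (hfg : ∀ r ∈ Ioo (0:ℝ) 1, f r = g r) :
    ∫ r in (0:ℝ)..1, f r = ∫ r in (0:ℝ)..1, g r := by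
  apply intervalIntegral.integral_congr_ae
  have h1 : ∀ᵐ (x:ℝ), x ≠ (1:ℝ) := by
    have : (volume ({(1:ℝ)} : Set ℝ)) = 0 := Real.volume_singleton
    exact (measure_eq_zero_iff_ae_notMem.mp this).mono (by intro a ha; simpa using ha)
  filter_upwards [h1] with x hx hmem
  rw [uIoc_of_le zero_le_one] at hmem
  exact hfg x ⟨hmem.1, lt_of_le_of_ne hmem.2 hx⟩
lemma myF_cont (hc : ContinuousOn h (Icc 0 1)) :
    ContinuousOn (fun r => ∫ s in (0:ℝ)..r, s^(n+1) * h s) (Icc 0 1) := by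
  have hint : IntegrableOn (fun s : ℝ => s^(n+1) * h s) (uIcc (0:ℝ) 1) := by
    rw [uIcc_of_le zero_le_one]
    exact (((continuous_pow (n+1)).continuousOn).mul hc).integrableOn_Icc
  simpa [uIcc_of_le (zero_le_one : (0:ℝ) ≤ 1)] using
    intervalIntegral.continuousOn_primitive_interval hint

lemma myF_bound (hC0 : 0 ≤ C) (hC : ∀ x ∈ Icc (0:ℝ) 1, |h x| ≤ C) :
    ∀ r ∈ Icc (0:ℝ) 1, |∫ s in (0:ℝ)..r, s^(n+1) * h s| ≤ C * r^(n+2) := by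
  intro r hr
  have key : ∀ x ∈ uIoc (0:ℝ) r, ‖x^(n+1) * h x‖ ≤ C * r^(n+1) := by
    intro x hx
    rw [uIoc_of_le hr.1] at hx
    rw [Real.norm_eq_abs, abs_mul, abs_pow, abs_of_nonneg hx.1.le]
    calc x^(n+1) * |h x| ≤ r^(n+1) * C := by
          apply mul_le_mul (pow_le_pow_left₀ hx.1.le hx.2 _)
            (hC x ⟨hx.1.le, hx.2.trans hr.2⟩) (abs_nonneg _)
            (pow_nonneg (hx.1.le.trans hx.2) _)
      _ = C * r^(n+1) := mul_comm _ _
  have := intervalIntegral.norm_integral_le_of_norm_le_const key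
  rw [Real.norm_eq_abs] at this
  calc |∫ s in (0:ℝ)..r, s^(n+1) * h s| ≤ C * r^(n+1) * |r - 0| := this
    _ = C * r^(n+2) := by
        rw [sub_zero, abs_of_nonneg hr.1, pow_succ]; ring

lemma myF_deriv (hc : ContinuousOn h (Icc 0 1)) :
    ∀ r ∈ Ioo (0:ℝ) 1, HasDerivAt (fun r => ∫ s in (0:ℝ)..r, s^(n+1) * h s)
      (r^(n+1) * h r) r := by
  intro r hr
  have hsub : Icc (0:ℝ) r ⊆ Icc 0 1 := Icc_subset_Icc le_rfl hr.2.le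
  have hint : IntervalIntegrable (fun s : ℝ => s^(n+1) * h s) volume 0 r := by
    apply ContinuousOn.intervalIntegrable
    rw [uIcc_of_le hr.1.le]
    exact ((continuous_pow (n+1)).continuousOn).mul (hc.mono hsub)
  have hcon : ContinuousOn (fun s : ℝ => s^(n+1) * h s) (Ioo 0 1) :=
    ((continuous_pow (n+1)).continuousOn).mul (hc.mono Ioo_subset_Icc_self)
  have hmeas := hcon.stronglyMeasurableAtFilter (μ := volume) isOpen_Ioo r hr
  have hca : ContinuousAt (fun s : ℝ => s^(n+1) * h s) r :=
    ((continuous_pow (n+1)).continuousAt).mul (hc.continuousAt (Icc_mem_nhds hr.1 hr.2))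
  exact intervalIntegral.integral_hasDerivAt_right hint hmeas hca

lemma myG_deriv (hc : ContinuousOn h (Icc 0 1)) :
    ∀ r ∈ Ioo (0:ℝ) 1, HasDerivAt (fun r => ∫ s in r..1, h s * s / s^n)
      (-(h r * r / r^n)) r := by
  intro r hr
  have hGeq : (fun r : ℝ => ∫ s in r..1, h s * s / s^n)
      = fun u => -∫ s in (1:ℝ)..u, h s * s / s^n := by
    funext u; rw [intervalIntegral.integral_symm]
  rw [hGeq]
  have hint : IntervalIntegrable (fun s : ℝ => h s * s / s^n) volume 1 r := by
    apply ContinuousOn.intervalIntegrable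
    rw [uIcc_of_ge hr.2.le]
    apply ContinuousOn.div
    · exact ((hc.mono (Icc_subset_Icc hr.1.le le_rfl)).mul continuous_id.continuousOn)
    · exact (continuous_pow n).continuousOn
    · intro x hx; exact pow_ne_zero _ (ne_of_gt (lt_of_lt_of_le hr.1 hx.1))
  have hcon : ContinuousOn (fun s : ℝ => h s * s / s^n) (Ioo 0 1) := by
    apply ContinuousOn.div
    · exact (hc.mono Ioo_subset_Icc_self).mul continuous_id.continuousOn
    · exact (continuous_pow n).continuousOn
    · intro x hx; exact pow_ne_zero _ (ne_of_gt hx.1)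
  have hmeas := hcon.stronglyMeasurableAtFilter (μ := volume) isOpen_Ioo r hr
  have hca : ContinuousAt (fun s : ℝ => h s * s / s^n) r := by
    apply ContinuousAt.div
    · exact (hc.continuousAt (Icc_mem_nhds hr.1 hr.2)).mul continuous_id.continuousAt
    · exact (continuous_pow n).continuousAt
    · exact pow_ne_zero _ (ne_of_gt hr.1)
  exact (intervalIntegral.integral_hasDerivAt_right hint hmeas hca).neg

lemma myG_cont (hc : ContinuousOn h (Icc 0 1)) :
    ContinuousOn (fun r => ∫ s in r..1, h s * s / s^n) (Ioc 0 1) := by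
  intro r hr
  have ha0 : 0 < r/2 := by linarith [hr.1]
  have har : r/2 < r := by linarith [hr.1]
  have hint : IntegrableOn (fun s : ℝ => h s * s / s^n) (uIcc (r/2) 1) := by
    rw [uIcc_of_le (by linarith [hr.2] : r/2 ≤ 1)]
    apply ContinuousOn.integrableOn_Icc
    apply ContinuousOn.div
    · exact (hc.mono (Icc_subset_Icc ha0.le le_rfl)).mul continuous_id.continuousOn
    · exact (continuous_pow n).continuousOn
    · intro x hx; exact pow_ne_zero _ (ne_of_gt (lt_of_lt_of_le ha0 hx.1))
  have hBig := intervalIntegral.continuousOn_primitive_interval_left hint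
  have hrmem : r ∈ uIcc (r/2) 1 := by
    rw [uIcc_of_le (by linarith [hr.2] : r/2 ≤ 1)]
    exact ⟨har.le, hr.2⟩
  refine (hBig r hrmem).mono_of_mem_nhdsWithin ?_
  rw [uIcc_of_le (by linarith [hr.2] : r/2 ≤ 1)]
  apply mem_nhdsWithin.mpr
  exact ⟨Ioi (r/2), isOpen_Ioi, har, fun x hx => ⟨le_of_lt hx.1, hx.2.2⟩⟩
lemma myG_bound (hn : 1 ≤ n) (hC0 : 0 ≤ C) (hC : ∀ x ∈ Icc (0:ℝ) 1, |h x| ≤ C) :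
    ∀ r ∈ Ioc (0:ℝ) 1, |∫ s in r..1, h s * s / s^n| ≤ C * (r / r^n) := by
  obtain ⟨m, rfl⟩ : ∃ m, n = m + 1 := ⟨n-1, by omega⟩
  intro r hr
  have hr0 : 0 < r := hr.1
  have hrn : (0:ℝ) < r^(m+1) := pow_pos hr0 _
  have hbase : 0 ≤ C * (r / r^(m+1)) := by positivity
  have key : ∀ x ∈ uIoc r (1:ℝ), ‖h x * x / x^(m+1)‖ ≤ C * (r / r^(m+1)) := by
    intro x hx
    rw [uIoc_of_le hr.2] at hx
    have hx0 : 0 < x := lt_trans hr0 hx.1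
    rw [Real.norm_eq_abs, abs_div, abs_mul, abs_of_nonneg hx0.le, abs_pow,
      abs_of_nonneg hx0.le]
    have hxx : x / x^(m+1) ≤ r / r^(m+1) := by
      rw [div_le_div_iff₀ (pow_pos hx0 _) hrn]
      calc x * r^(m+1) = (x * r) * r^m := by ring
        _ ≤ (x * r) * x^m := by
            apply mul_le_mul_of_nonneg_left
              (pow_le_pow_left₀ hr0.le hx.1.le _) (by positivity)
        _ = r * x^(m+1) := by ring
    calc |h x| * x / x^(m+1) = |h x| * (x / x^(m+1)) := by ring
      _ ≤ C * (r / r^(m+1)) := mul_le_mul (hC x ⟨hx0.le, hx.2⟩) hxx (by positivity) hC0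
  calc |∫ s in r..1, h s * s / s^(m+1)| ≤ C * (r / r^(m+1)) * |1 - r| :=
        intervalIntegral.norm_integral_le_of_norm_le_const key
    _ ≤ C * (r / r^(m+1)) * 1 := by
        apply mul_le_mul_of_nonneg_left _ hbase
        rw [abs_of_nonneg (by linarith [hr.2])]; linarith [hr.1]
    _ = C * (r / r^(m+1)) := mul_one _


lemma my_pow_div3 {r : ℝ} (hr : r ≠ 0) (n : ℕ) : r ^ (n+2) * (r / r^n) = r^3 := by
  field_simp; ring

lemma myIoc_mem_nhdsWithin {r : ℝ} (hr0 : 0 < r) :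
    Ioc (0:ℝ) 1 ∈ nhdsWithin r (Icc (0:ℝ) 1) :=
  mem_nhdsWithin.mpr ⟨Ioi 0, isOpen_Ioi, hr0, fun x hx => ⟨hx.1, hx.2.2⟩⟩

lemma myPsi_cont (hn : 1 ≤ n) (hc : ContinuousOn h (Icc 0 1)) (hC0 : 0 ≤ C)
    (hC : ∀ x ∈ Icc (0:ℝ) 1, |h x| ≤ C) :
    ContinuousOn (fun r => (∫ s in (0:ℝ)..r, s^(n+1) * h s) *
      (∫ s in r..1, h s * s / s^n)) (Icc 0 1) := by
  intro r hr
  rcases eq_or_lt_of_le hr.1 with h0 | h0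
  · -- r = 0 : squeeze
    subst h0
    have hb : ∀ x ∈ Icc (0:ℝ) 1, ‖(∫ s in (0:ℝ)..x, s^(n+1) * h s) *
        (∫ s in x..1, h s * s / s^n)‖ ≤ C * C * x := by
      intro x hx
      rcases eq_or_lt_of_le hx.1 with hx0 | hx0
      · rw [← hx0]; simp
      · rw [Real.norm_eq_abs, abs_mul]
        calc |∫ s in (0:ℝ)..x, s^(n+1) * h s| * |∫ s in x..1, h s * s / s^n|
            ≤ (C * x^(n+2)) * (C * (x / x^n)) := by
              apply mul_le_mul (myF_bound hC0 hC x hx) (myG_bound hn hC0 hC x ⟨hx0, hx.2⟩)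
                (abs_nonneg _) (by positivity)
          _ = C * C * (x^(n+2) * (x / x^n)) := by ring
          _ = C * C * x^3 := by rw [my_pow_div3 (ne_of_gt hx0)]
          _ ≤ C * C * x := by
              apply mul_le_mul_of_nonneg_left _ (by positivity)
              calc x^3 ≤ x^1 := pow_le_pow_of_le_one hx.1 hx.2 (by norm_num)
                _ = x := pow_one x
    have hg : Tendsto (fun x : ℝ => C * C * x) (nhdsWithin 0 (Icc (0:ℝ) 1)) (nhds 0) := by
      have h1 : Continuous (fun x : ℝ => C * C * x) := by fun_prop
      have := (h1.tendsto 0).mono_left (nhdsWithin_le_nhds (s := Icc (0:ℝ) 1))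
      simpa using this
    have key := squeeze_zero_norm' (eventually_nhdsWithin_of_forall hb) hg
    show Tendsto _ _ _
    have h00 : (∫ s in (0:ℝ)..(0:ℝ), s^(n+1) * h s) * (∫ s in (0:ℝ)..1, h s * s / s^n)
        = 0 := by rw [intervalIntegral.integral_same, zero_mul]
    simpa [h00] using key
  · -- r > 0
    exact ((myF_cont hc r hr).mul
      (((myG_cont hc) r ⟨h0, hr.2⟩).mono_of_mem_nhdsWithin (myIoc_mem_nhdsWithin h0)))

lemma myPhi_cont (hn : 1 ≤ n) (hc : ContinuousOn h (Icc 0 1)) (hC0 : 0 ≤ C)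
    (hC : ∀ x ∈ Icc (0:ℝ) 1, |h x| ≤ C) :
    ContinuousOn (fun r => (∫ s in (0:ℝ)..r, s^(n+1) * h s)^2 / r^(2*n)) (Icc 0 1) := by
  intro r hr
  rcases eq_or_lt_of_le hr.1 with h0 | h0
  · subst h0
    have hb : ∀ x ∈ Icc (0:ℝ) 1, ‖(∫ s in (0:ℝ)..x, s^(n+1) * h s)^2 / x^(2*n)‖
        ≤ C * C * x := by
      intro x hx
      rcases eq_or_lt_of_le hx.1 with hx0 | hx0
      · rw [← hx0]; simp
      · have hxn : (0:ℝ) < x^(2*n) := pow_pos hx0 _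
        rw [Real.norm_eq_abs, abs_div, abs_pow, abs_of_nonneg hxn.le]
        calc |∫ s in (0:ℝ)..x, s^(n+1) * h s|^2 / x^(2*n)
            ≤ (C * x^(n+2))^2 / x^(2*n) := by
              apply div_le_div_of_nonneg_right _ hxn.le
              exact pow_le_pow_left₀ (abs_nonneg _) (myF_bound hC0 hC x hx) 2
          _ = C * C * x^4 := by field_simp; ring
          _ ≤ C * C * x := by
              apply mul_le_mul_of_nonneg_left _ (by positivity)
              calc x^4 ≤ x^1 := pow_le_pow_of_le_one hx.1 hx.2 (by norm_num)
                _ = x := pow_one x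
    have hg : Tendsto (fun x : ℝ => C * C * x) (nhdsWithin 0 (Icc (0:ℝ) 1)) (nhds 0) := by
      have h1 : Continuous (fun x : ℝ => C * C * x) := by fun_prop
      have := (h1.tendsto 0).mono_left (nhdsWithin_le_nhds (s := Icc (0:ℝ) 1))
      simpa using this
    have key := squeeze_zero_norm' (eventually_nhdsWithin_of_forall hb) hg
    show Tendsto _ _ _
    have h00 : (∫ s in (0:ℝ)..(0:ℝ), s^(n+1) * h s)^2 / (0:ℝ)^(2*n) = 0 := by
      rw [intervalIntegral.integral_same]; simp
    simpa [h00] using key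
  · apply ContinuousWithinAt.div
    · exact (myF_cont hc r hr).pow 2
    · exact (continuous_pow (2*n)).continuousWithinAt
    · exact pow_ne_zero _ (ne_of_gt h0)
lemma my_pow_div2 {r : ℝ} (hr : r ≠ 0) (n : ℕ) : r^(n+1) * (r / r^n) = r^2 := by
  field_simp; ring

lemma my_aux1 {r : ℝ} (hr : r ≠ 0) (n : ℕ) : r^(n+1) * r^(n+2) / r^(2*n) = r^3 := by
  rw [div_eq_iff (pow_ne_zero _ hr)]; ring

lemma my_aux2 {r : ℝ} (hr : r ≠ 0) (n : ℕ) : (r^(n+2))^2 / r^(2*n+1) = r^3 := by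
  rw [div_eq_iff (pow_ne_zero _ hr)]; ring

lemma my_aux3 {r : ℝ} (hr : r ≠ 0) (n : ℕ) : r * (r^(n+2) / r^n) = r^3 := by
  rw [mul_div_assoc', div_eq_iff (pow_ne_zero _ hr)]; ring

lemma myIBP (hn : 1 ≤ n) (hc : ContinuousOn h (Icc 0 1)) (hC0 : 0 ≤ C)
    (hC : ∀ x ∈ Icc (0:ℝ) 1, |h x| ≤ C) :
    ∫ r in (0:ℝ)..1, (r^(n+1) * h r * (∫ s in r..1, h s * s / s^n)
      + (∫ s in (0:ℝ)..r, s^(n+1) * h s) * (-(h r * r / r^n))) = 0 := by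
  have hcont := myPsi_cont hn hc hC0 hC
  have hderiv : ∀ r ∈ Ioo (0:ℝ) 1, HasDerivWithinAt
      (fun r => (∫ s in (0:ℝ)..r, s^(n+1) * h s) * (∫ s in r..1, h s * s / s^n))
      (r^(n+1) * h r * (∫ s in r..1, h s * s / s^n)
        + (∫ s in (0:ℝ)..r, s^(n+1) * h s) * (-(h r * r / r^n))) (Ioi r) r :=
    fun r hr => ((myF_deriv hc r hr).mul (myG_deriv hc r hr)).hasDerivWithinAt
  have hint : IntervalIntegrable (fun r => r^(n+1) * h r * (∫ s in r..1, h s * s / s^n)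
      + (∫ s in (0:ℝ)..r, s^(n+1) * h s) * (-(h r * r / r^n))) volume 0 1 := by
    apply my_bdd_int (C := C*C + C*C)
    · apply ContinuousOn.add
      · exact (((continuous_pow (n+1)).continuousOn.mul
          (hc.mono Ioc_subset_Icc_self)).mul (myG_cont hc))
      · apply ContinuousOn.mul ((myF_cont hc).mono Ioc_subset_Icc_self)
        apply ContinuousOn.neg
        apply ContinuousOn.div
        · exact (hc.mono Ioc_subset_Icc_self).mul continuous_id.continuousOn
        · exact (continuous_pow n).continuousOn
        · intro x hx; exact pow_ne_zero _ (ne_of_gt hx.1)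
    · intro r hr
      have hr0 : (0:ℝ) < r := hr.1
      have hrIcc : r ∈ Icc (0:ℝ) 1 := ⟨hr0.le, hr.2⟩
      have h1 : |h r| ≤ C := hC r hrIcc
      have t1 : |r^(n+1) * h r * (∫ s in r..1, h s * s / s^n)| ≤ C * C := by
        rw [abs_mul, abs_mul, abs_pow, abs_of_nonneg hr0.le]
        calc r^(n+1) * |h r| * |∫ s in r..1, h s * s / s^n|
            ≤ r^(n+1) * C * (C * (r / r^n)) :=
              mul_le_mul (mul_le_mul_of_nonneg_left h1 (by positivity))
                (myG_bound hn hC0 hC r hr) (abs_nonneg _) (by positivity)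
          _ = C * C * (r^(n+1) * (r / r^n)) := by ring
          _ = C * C * r^2 := by rw [my_pow_div2 hr0.ne']
          _ ≤ C * C * 1 := mul_le_mul_of_nonneg_left (pow_le_one₀ hr0.le hr.2) (by positivity)
          _ = C * C := mul_one _
      have t2 : |(∫ s in (0:ℝ)..r, s^(n+1) * h s) * (-(h r * r / r^n))| ≤ C * C := by
        rw [abs_mul, abs_neg, abs_div, abs_mul, abs_of_nonneg hr0.le, abs_pow,
          abs_of_nonneg hr0.le]
        calc |∫ s in (0:ℝ)..r, s^(n+1) * h s| * (|h r| * r / r^n)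
            ≤ (C * r^(n+2)) * (C * (r / r^n)) := by
              apply mul_le_mul (myF_bound hC0 hC r hrIcc) _ (by positivity) (by positivity)
              rw [mul_div_assoc]
              exact mul_le_mul_of_nonneg_right h1 (by positivity)
          _ = C * C * (r^(n+2) * (r / r^n)) := by ring
          _ = C * C * r^3 := by rw [my_pow_div3 hr0.ne']
          _ ≤ C * C * 1 := mul_le_mul_of_nonneg_left (pow_le_one₀ hr0.le hr.2) (by positivity)
          _ = C * C := mul_one _
      calc |r^(n+1) * h r * (∫ s in r..1, h s * s / s^n)
            + (∫ s in (0:ℝ)..r, s^(n+1) * h s) * (-(h r * r / r^n))|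
          ≤ _ + _ := abs_add_le _ _
        _ ≤ C * C + C * C := add_le_add t1 t2
  have key := intervalIntegral.integral_eq_sub_of_hasDeriv_right_of_le zero_le_one
    hcont hderiv hint
  rw [key]
  simp

lemma myPhi_deriv (hn : 1 ≤ n) (hc : ContinuousOn h (Icc 0 1)) :
    ∀ r ∈ Ioo (0:ℝ) 1, HasDerivAt
      (fun r => (∫ s in (0:ℝ)..r, s^(n+1) * h s)^2 / r^(2*n))
      (2 * ((r^(n+1) * h r) * (∫ s in (0:ℝ)..r, s^(n+1) * h s) / r^(2*n))
        - (2*(n:ℝ)) * ((∫ s in (0:ℝ)..r, s^(n+1) * h s)^2 / r^(2*n+1))) r := by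
  intro r hr
  have hr0 : (0:ℝ) < r := hr.1
  have hF := myF_deriv (n := n) hc r hr
  have hnum : HasDerivAt (fun r => (∫ s in (0:ℝ)..r, s^(n+1) * h s)^2)
      (2 * (∫ s in (0:ℝ)..r, s^(n+1) * h s) * (r^(n+1) * h r)) r := by
    have := hF.pow 2
    norm_num at this
    exact this
  have hden : HasDerivAt (fun r : ℝ => r^(2*n)) (((2*n : ℕ) : ℝ) * r^(2*n - 1)) r :=
    hasDerivAt_pow (2*n) r
  have hd := hnum.div hden (pow_ne_zero _ hr0.ne')
  refine hd.congr_deriv ?_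
  obtain ⟨k, hk⟩ : ∃ k, 2*n = k+1 := ⟨2*n-1, by omega⟩
  have hkr : ((2*n : ℕ) : ℝ) = 2*(n:ℝ) := by push_cast; ring
  rw [hk, Nat.add_sub_cancel, ← hk, hkr]
  have hrn : r^(2*n) ≠ 0 := pow_ne_zero _ hr0.ne'
  have hrn1 : r^(2*n+1) ≠ 0 := pow_ne_zero _ hr0.ne'
  have hrk : r ^ k = r^(2*n) / r := by
    rw [eq_div_iff hr0.ne', ← pow_succ, ← hk]
  rw [hrk]
  field_simp
  ring
lemma myIntInt_congr {f g : ℝ → ℝ} {a b : ℝ} (hfg : EqOn f g (uIcc a b))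
    (hg : IntervalIntegrable g volume a b) : IntervalIntegrable f volume a b := by
  apply hg.congr_ae
  rw [Filter.EventuallyEq, ae_restrict_iff' measurableSet_uIoc]
  exact Filter.Eventually.of_forall (fun x hx => (hfg (uIoc_subset_uIcc hx)).symm)

lemma myInner (hn : 1 ≤ n) (hc : ContinuousOn h (Icc 0 1)) :
    ∀ r ∈ Ioo (0:ℝ) 1,
    (∫ s in (0:ℝ)..1, (1/(2*(n:ℝ))) * (if r ≤ s then (r/s)^n else (s/r)^n)
        * h r * h s * r * s)
    = (1/(2*(n:ℝ))) * h r * r * ((∫ s in (0:ℝ)..r, s^(n+1) * h s) / r^n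
        + r^n * (∫ s in r..1, h s * s / s^n)) := by
  intro r hr
  have hr0 : (0:ℝ) < r := hr.1
  have hrn : (r:ℝ)^n ≠ 0 := pow_ne_zero _ hr0.ne'
  have e1 : EqOn (fun s => (1/(2*(n:ℝ))) * (if r ≤ s then (r/s)^n else (s/r)^n)
      * h r * h s * r * s)
      (fun s => ((1/(2*(n:ℝ))) * h r * r / r^n) * (s^(n+1) * h s)) (uIcc 0 r) := by
    intro s hs
    rw [uIcc_of_le hr0.le] at hs
    rcases lt_or_eq_of_le hs.2 with hsr | hsr
    · simp only [if_neg (not_le.mpr hsr), div_pow]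
      field_simp
      ring
    · subst hsr
      simp only [if_pos le_rfl, div_self hr0.ne', one_pow]
      field_simp
      ring
  have e2 : EqOn (fun s => (1/(2*(n:ℝ))) * (if r ≤ s then (r/s)^n else (s/r)^n)
      * h r * h s * r * s)
      (fun s => ((1/(2*(n:ℝ))) * h r * r * r^n) * (h s * s / s^n)) (uIcc r 1) := by
    intro s hs
    rw [uIcc_of_le hr.2.le] at hs
    have hs0 : (0:ℝ) < s := lt_of_lt_of_le hr0 hs.1
    simp only [if_pos hs.1, div_pow]
    field_simp
  have hcont1 : ContinuousOn (fun s : ℝ => ((1/(2*(n:ℝ))) * h r * r / r^n)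
      * (s^(n+1) * h s)) (uIcc 0 r) := by
    rw [uIcc_of_le hr0.le]
    exact continuousOn_const.mul (((continuous_pow (n+1)).continuousOn).mul
      (hc.mono (Icc_subset_Icc le_rfl hr.2.le)))
  have hcont2 : ContinuousOn (fun s : ℝ => ((1/(2*(n:ℝ))) * h r * r * r^n)
      * (h s * s / s^n)) (uIcc r 1) := by
    rw [uIcc_of_le hr.2.le]
    apply continuousOn_const.mul
    apply ContinuousOn.div
    · exact (hc.mono (Icc_subset_Icc hr0.le le_rfl)).mul continuous_id.continuousOn
    · exact (continuous_pow n).continuousOn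
    · intro x hx; exact pow_ne_zero _ (ne_of_gt (lt_of_lt_of_le hr0 hx.1))
  have i1 := myIntInt_congr e1 (hcont1.intervalIntegrable)
  have i2 := myIntInt_congr e2 (hcont2.intervalIntegrable)
  rw [← intervalIntegral.integral_add_adjacent_intervals i1 i2,
    intervalIntegral.integral_congr e1, intervalIntegral.integral_congr e2,
    intervalIntegral.integral_const_mul, intervalIntegral.integral_const_mul]
  ring
lemma my_aux4 {r : ℝ} (hr : r ≠ 0) (n : ℕ) : r^n * (r / r^n) = r := by
  field_simp

lemma myint_q (hc : ContinuousOn h (Icc 0 1)) (hC0 : 0 ≤ C)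
    (hC : ∀ x ∈ Icc (0:ℝ) 1, |h x| ≤ C) :
    IntervalIntegrable (fun r => h r * r * ((∫ s in (0:ℝ)..r, s^(n+1) * h s) / r^n))
      volume 0 1 := by
  apply my_bdd_int (C := C*C)
  · apply ContinuousOn.mul ((hc.mono Ioc_subset_Icc_self).mul continuous_id.continuousOn)
    apply ContinuousOn.div ((myF_cont hc).mono Ioc_subset_Icc_self)
      (continuous_pow n).continuousOn
    intro x hx; exact pow_ne_zero _ (ne_of_gt hx.1)
  · intro r hr
    have hr0 : (0:ℝ) < r := hr.1
    have hrIcc : r ∈ Icc (0:ℝ) 1 := ⟨hr0.le, hr.2⟩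
    rw [abs_mul, abs_mul, abs_div, abs_pow, abs_of_nonneg hr0.le]
    calc |h r| * r * (|∫ s in (0:ℝ)..r, s^(n+1) * h s| / r^n)
        ≤ C * r * ((C * r^(n+2)) / r^n) := by
          apply mul_le_mul (mul_le_mul_of_nonneg_right (hC r hrIcc) hr0.le)
            (div_le_div_of_nonneg_right (myF_bound hC0 hC r hrIcc) (pow_pos hr0 n).le)
            (by positivity) (by positivity)
      _ = C * C * (r * (r^(n+2) / r^n)) := by ring
      _ = C * C * r^3 := by rw [my_aux3 hr0.ne']
      _ ≤ C * C * 1 := mul_le_mul_of_nonneg_left (pow_le_one₀ hr0.le hr.2) (by positivity)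
      _ = C * C := mul_one _

lemma myint_p2 (hn : 1 ≤ n) (hc : ContinuousOn h (Icc 0 1)) (hC0 : 0 ≤ C)
    (hC : ∀ x ∈ Icc (0:ℝ) 1, |h x| ≤ C) :
    IntervalIntegrable (fun r => h r * r * (r^n * (∫ s in r..1, h s * s / s^n)))
      volume 0 1 := by
  apply my_bdd_int (C := C*C)
  · exact ((hc.mono Ioc_subset_Icc_self).mul continuous_id.continuousOn).mul
      ((continuous_pow n).continuousOn.mul (myG_cont hc))
  · intro r hr
    have hr0 : (0:ℝ) < r := hr.1
    have hrIcc : r ∈ Icc (0:ℝ) 1 := ⟨hr0.le, hr.2⟩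
    rw [abs_mul, abs_mul, abs_mul, abs_pow, abs_of_nonneg hr0.le]
    calc |h r| * r * (r^n * |∫ s in r..1, h s * s / s^n|)
        ≤ C * r * (r^n * (C * (r / r^n))) := by
          apply mul_le_mul (mul_le_mul_of_nonneg_right (hC r hrIcc) hr0.le)
            (mul_le_mul_of_nonneg_left (myG_bound hn hC0 hC r hr) (by positivity))
            (by positivity) (by positivity)
      _ = C * C * (r * (r^n * (r / r^n))) := by ring
      _ = C * C * r^2 := by rw [my_aux4 hr0.ne']; ring
      _ ≤ C * C * 1 := mul_le_mul_of_nonneg_left (pow_le_one₀ hr0.le hr.2) (by positivity)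
      _ = C * C := mul_one _

lemma myint_p (hn : 1 ≤ n) (hc : ContinuousOn h (Icc 0 1)) (hC0 : 0 ≤ C)
    (hC : ∀ x ∈ Icc (0:ℝ) 1, |h x| ≤ C) :
    IntervalIntegrable (fun r => r^(n+1) * h r * (∫ s in r..1, h s * s / s^n))
      volume 0 1 := by
  apply my_bdd_int (C := C*C)
  · exact ((continuous_pow (n+1)).continuousOn.mul (hc.mono Ioc_subset_Icc_self)).mul
      (myG_cont hc)
  · intro r hr
    have hr0 : (0:ℝ) < r := hr.1
    rw [abs_mul, abs_mul, abs_pow, abs_of_nonneg hr0.le]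
    calc r^(n+1) * |h r| * |∫ s in r..1, h s * s / s^n|
        ≤ r^(n+1) * C * (C * (r / r^n)) :=
          mul_le_mul (mul_le_mul_of_nonneg_left (hC r ⟨hr0.le, hr.2⟩) (by positivity))
            (myG_bound hn hC0 hC r hr) (abs_nonneg _) (by positivity)
      _ = C * C * (r^(n+1) * (r / r^n)) := by ring
      _ = C * C * r^2 := by rw [my_pow_div2 hr0.ne']
      _ ≤ C * C * 1 := mul_le_mul_of_nonneg_left (pow_le_one₀ hr0.le hr.2) (by positivity)
      _ = C * C := mul_one _

lemma myint_w (hc : ContinuousOn h (Icc 0 1)) (hC0 : 0 ≤ C)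
    (hC : ∀ x ∈ Icc (0:ℝ) 1, |h x| ≤ C) :
    IntervalIntegrable (fun r => (∫ s in (0:ℝ)..r, s^(n+1) * h s) * (-(h r * r / r^n)))
      volume 0 1 := by
  apply my_bdd_int (C := C*C)
  · apply ContinuousOn.mul ((myF_cont hc).mono Ioc_subset_Icc_self)
    apply ContinuousOn.neg
    apply ContinuousOn.div ((hc.mono Ioc_subset_Icc_self).mul continuous_id.continuousOn)
      (continuous_pow n).continuousOn
    intro x hx; exact pow_ne_zero _ (ne_of_gt hx.1)
  · intro r hr
    have hr0 : (0:ℝ) < r := hr.1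
    have hrIcc : r ∈ Icc (0:ℝ) 1 := ⟨hr0.le, hr.2⟩
    rw [abs_mul, abs_neg, abs_div, abs_mul, abs_of_nonneg hr0.le, abs_pow,
      abs_of_nonneg hr0.le]
    calc |∫ s in (0:ℝ)..r, s^(n+1) * h s| * (|h r| * r / r^n)
        ≤ (C * r^(n+2)) * (C * (r / r^n)) := by
          apply mul_le_mul (myF_bound hC0 hC r hrIcc) _ (by positivity) (by positivity)
          rw [mul_div_assoc]
          exact mul_le_mul_of_nonneg_right (hC r hrIcc) (by positivity)
      _ = C * C * (r^(n+2) * (r / r^n)) := by ring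
      _ = C * C * r^3 := by rw [my_pow_div3 hr0.ne']
      _ ≤ C * C * 1 := mul_le_mul_of_nonneg_left (pow_le_one₀ hr0.le hr.2) (by positivity)
      _ = C * C := mul_one _

lemma myint_u (hc : ContinuousOn h (Icc 0 1)) (hC0 : 0 ≤ C)
    (hC : ∀ x ∈ Icc (0:ℝ) 1, |h x| ≤ C) :
    IntervalIntegrable
      (fun r => r^(n+1) * h r * (∫ s in (0:ℝ)..r, s^(n+1) * h s) / r^(2*n))
      volume 0 1 := by
  apply my_bdd_int (C := C*C)
  · apply ContinuousOn.div
    · exact ((continuous_pow (n+1)).continuousOn.mul (hc.mono Ioc_subset_Icc_self)).mul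
        ((myF_cont hc).mono Ioc_subset_Icc_self)
    · exact (continuous_pow (2*n)).continuousOn
    · intro x hx; exact pow_ne_zero _ (ne_of_gt hx.1)
  · intro r hr
    have hr0 : (0:ℝ) < r := hr.1
    have hrIcc : r ∈ Icc (0:ℝ) 1 := ⟨hr0.le, hr.2⟩
    rw [abs_div, abs_mul, abs_mul, abs_pow, abs_pow, abs_of_nonneg hr0.le]
    calc r^(n+1) * |h r| * |∫ s in (0:ℝ)..r, s^(n+1) * h s| / r^(2*n)
        ≤ r^(n+1) * C * (C * r^(n+2)) / r^(2*n) := by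
          apply div_le_div_of_nonneg_right _ (pow_pos hr0 _).le
          exact mul_le_mul (mul_le_mul_of_nonneg_left (hC r hrIcc) (by positivity))
            (myF_bound hC0 hC r hrIcc) (abs_nonneg _) (by positivity)
      _ = C * C * (r^(n+1) * r^(n+2) / r^(2*n)) := by ring
      _ = C * C * r^3 := by rw [my_aux1 hr0.ne']
      _ ≤ C * C * 1 := mul_le_mul_of_nonneg_left (pow_le_one₀ hr0.le hr.2) (by positivity)
      _ = C * C := mul_one _

lemma myint_v (hc : ContinuousOn h (Icc 0 1)) (hC0 : 0 ≤ C)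
    (hC : ∀ x ∈ Icc (0:ℝ) 1, |h x| ≤ C) :
    IntervalIntegrable (fun r => (∫ s in (0:ℝ)..r, s^(n+1) * h s)^2 / r^(2*n+1))
      volume 0 1 := by
  apply my_bdd_int (C := C*C)
  · apply ContinuousOn.div
    · exact ((myF_cont hc).mono Ioc_subset_Icc_self).pow 2
    · exact (continuous_pow (2*n+1)).continuousOn
    · intro x hx; exact pow_ne_zero _ (ne_of_gt hx.1)
  · intro r hr
    have hr0 : (0:ℝ) < r := hr.1
    have hrIcc : r ∈ Icc (0:ℝ) 1 := ⟨hr0.le, hr.2⟩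
    rw [abs_div, abs_pow, abs_pow, abs_of_nonneg hr0.le]
    calc |∫ s in (0:ℝ)..r, s^(n+1) * h s|^2 / r^(2*n+1)
        ≤ (C * r^(n+2))^2 / r^(2*n+1) := by
          apply div_le_div_of_nonneg_right _ (pow_pos hr0 _).le
          exact pow_le_pow_left₀ (abs_nonneg _) (myF_bound hC0 hC r hrIcc) 2
      _ = C * C * ((r^(n+2))^2 / r^(2*n+1)) := by ring
      _ = C * C * r^3 := by rw [my_aux2 hr0.ne']
      _ ≤ C * C * 1 := mul_le_mul_of_nonneg_left (pow_le_one₀ hr0.le hr.2) (by positivity)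
      _ = C * C := mul_one _

lemma myPhiFTC (hn : 1 ≤ n) (hc : ContinuousOn h (Icc 0 1)) (hC0 : 0 ≤ C)
    (hC : ∀ x ∈ Icc (0:ℝ) 1, |h x| ≤ C) :
    2 * (∫ r in (0:ℝ)..1, r^(n+1) * h r * (∫ s in (0:ℝ)..r, s^(n+1) * h s) / r^(2*n))
      - (2*(n:ℝ)) * (∫ r in (0:ℝ)..1, (∫ s in (0:ℝ)..r, s^(n+1) * h s)^2 / r^(2*n+1))
    = (∫ s in (0:ℝ)..1, s^(n+1) * h s)^2 := by
  have hu := myint_u (n := n) hc hC0 hC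
  have hv := myint_v (n := n) hc hC0 hC
  have key := intervalIntegral.integral_eq_sub_of_hasDeriv_right_of_le zero_le_one
    (myPhi_cont hn hc hC0 hC) (fun r hr => (myPhi_deriv hn hc r hr).hasDerivWithinAt)
    ((hu.const_mul 2).sub (hv.const_mul (2*(n:ℝ))))
  rw [intervalIntegral.integral_sub (hu.const_mul 2) (hv.const_mul (2*(n:ℝ))),
    intervalIntegral.integral_const_mul, intervalIntegral.integral_const_mul] at key
  rw [key, intervalIntegral.integral_same]
  have hn0 : (2*n : ℕ) ≠ 0 := by omega
  simp [zero_pow hn0]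

lemma myKey (hn : 1 ≤ n) (hc : ContinuousOn h (Icc 0 1)) (hC0 : 0 ≤ C)
    (hC : ∀ x ∈ Icc (0:ℝ) 1, |h x| ≤ C) :
    (∫ r in (0:ℝ)..1, ∫ s in (0:ℝ)..1,
        (1/(2*(n:ℝ))) * (if r ≤ s then (r/s)^n else (s/r)^n) * h r * h s * r * s)
      = (1/(2*(n:ℝ))) * (∫ r in (0:ℝ)..1, h r * r^(n+1))^2
        + (∫ r in (0:ℝ)..1, r ^ (-(2*(n:ℤ))-1) * (∫ s in (0:ℝ)..r, s^(n+1) * h s)^2) := by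
  have hn0 : (0:ℝ) < (n:ℝ) := by exact_mod_cast Nat.pos_of_ne_zero (by omega)
  have hN : (2*(n:ℝ)) ≠ 0 := by positivity
  have hq := myint_q (n := n) hc hC0 hC
  have hp2 := myint_p2 hn hc hC0 hC
  have hp := myint_p hn hc hC0 hC
  have hw := myint_w (n := n) hc hC0 hC
  -- LHS
  have l1 : (∫ r in (0:ℝ)..1, ∫ s in (0:ℝ)..1,
      (1/(2*(n:ℝ))) * (if r ≤ s then (r/s)^n else (s/r)^n) * h r * h s * r * s)
      = ∫ r in (0:ℝ)..1, (1/(2*(n:ℝ))) * (h r * r * ((∫ s in (0:ℝ)..r, s^(n+1) * h s) / r^n)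
          + h r * r * (r^n * (∫ s in r..1, h s * s / s^n))) := by
    apply my_congr_Ioo
    intro r hr
    rw [myInner hn hc r hr]
    ring
  have l2 : (∫ r in (0:ℝ)..1, (1/(2*(n:ℝ))) * (h r * r * ((∫ s in (0:ℝ)..r, s^(n+1) * h s) / r^n)
          + h r * r * (r^n * (∫ s in r..1, h s * s / s^n))))
      = (1/(2*(n:ℝ))) * ((∫ r in (0:ℝ)..1, h r * r * ((∫ s in (0:ℝ)..r, s^(n+1) * h s) / r^n))
          + ∫ r in (0:ℝ)..1, h r * r * (r^n * (∫ s in r..1, h s * s / s^n))) := by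
    rw [intervalIntegral.integral_const_mul, intervalIntegral.integral_add hq hp2]
  -- IBP chain : ∫ p2 = ∫ q
  have l3 : (∫ r in (0:ℝ)..1, h r * r * (r^n * (∫ s in r..1, h s * s / s^n)))
      = ∫ r in (0:ℝ)..1, r^(n+1) * h r * (∫ s in r..1, h s * s / s^n) := by
    apply intervalIntegral.integral_congr
    intro x hx
    ring
  have l4 := myIBP hn hc hC0 hC
  rw [intervalIntegral.integral_add hp hw] at l4
  have l5 : (∫ r in (0:ℝ)..1, (∫ s in (0:ℝ)..r, s^(n+1) * h s) * (-(h r * r / r^n)))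
      = -∫ r in (0:ℝ)..1, h r * r * ((∫ s in (0:ℝ)..r, s^(n+1) * h s) / r^n) := by
    rw [← intervalIntegral.integral_neg]
    apply intervalIntegral.integral_congr
    intro x hx
    ring
  rw [l5] at l4
  have l6 : (∫ r in (0:ℝ)..1, r^(n+1) * h r * (∫ s in r..1, h s * s / s^n))
      = ∫ r in (0:ℝ)..1, h r * r * ((∫ s in (0:ℝ)..r, s^(n+1) * h s) / r^n) := by
    linarith
  -- RHS pieces
  have r1 : (∫ r in (0:ℝ)..1, h r * r^(n+1)) = ∫ s in (0:ℝ)..1, s^(n+1) * h s := by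
    apply intervalIntegral.integral_congr
    intro x hx
    ring
  have r2 : (∫ r in (0:ℝ)..1, r ^ (-(2*(n:ℤ))-1) * (∫ s in (0:ℝ)..r, s^(n+1) * h s)^2)
      = ∫ r in (0:ℝ)..1, (∫ s in (0:ℝ)..r, s^(n+1) * h s)^2 / r^(2*n+1) := by
    apply my_congr_Ioo
    intro r hr
    have hz : (-(2*(n:ℤ))-1) = -((2*n+1 : ℕ) : ℤ) := by push_cast; ring
    rw [hz, zpow_neg, zpow_natCast, inv_mul_eq_div]
  have r3 := myPhiFTC hn hc hC0 hC
  have r4 : (∫ r in (0:ℝ)..1, r^(n+1) * h r * (∫ s in (0:ℝ)..r, s^(n+1) * h s) / r^(2*n))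
      = ∫ r in (0:ℝ)..1, h r * r * ((∫ s in (0:ℝ)..r, s^(n+1) * h s) / r^n) := by
    apply my_congr_Ioo
    intro r hr
    have hr0 : (0:ℝ) < r := hr.1
    have e : r^(2*n) = r^n * r^n := by rw [← pow_add]; congr 1; omega
    rw [e]
    field_simp
    ring
  rw [r4] at r3
  rw [l1, l2, l3, l6, r1, r2]
  set Q := ∫ r in (0:ℝ)..1, h r * r * ((∫ s in (0:ℝ)..r, s^(n+1) * h s) / r^n)
  set B := ∫ s in (0:ℝ)..1, s^(n+1) * h s
  set V := ∫ r in (0:ℝ)..1, (∫ s in (0:ℝ)..r, s^(n+1) * h s)^2 / r^(2*n+1)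
  field_simp
  linarith
theorem stmt4 (h : ℝ → ℝ) (n : ℕ) (hn : 1 ≤ n) (hc : ContinuousOn h (Set.Icc 0 1)) :
    (∫ r in (0:ℝ)..1, ∫ s in (0:ℝ)..1,
        (1/(2*(n:ℝ))) * (if r ≤ s then (r/s)^n else (s/r)^n) * h r * h s * r * s)
      = (1/(2*(n:ℝ))) * (∫ r in (0:ℝ)..1, h r * r^(n+1))^2
        + (∫ r in (0:ℝ)..1, r ^ (-(2*(n:ℤ))-1) * (∫ s in (0:ℝ)..r, s^(n+1) * h s)^2) ∧
    0 ≤ (∫ r in (0:ℝ)..1, ∫ s in (0:ℝ)..1,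
        (1/(2*(n:ℝ))) * (if r ≤ s then (r/s)^n else (s/r)^n) * h r * h s * r * s) ∧
    ((∃ r ∈ Set.Icc (0:ℝ) 1, h r ≠ 0) →
      0 < ∫ r in (0:ℝ)..1, ∫ s in (0:ℝ)..1,
        (1/(2*(n:ℝ))) * (if r ≤ s then (r/s)^n else (s/r)^n) * h r * h s * r * s) := by
  obtain ⟨C, hCb⟩ := isCompact_Icc.exists_bound_of_continuousOn hc
  have hC : ∀ x ∈ Icc (0:ℝ) 1, |h x| ≤ C := fun x hx => by
    simpa [Real.norm_eq_abs] using hCb x hx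
  have hC0 : 0 ≤ C := le_trans (abs_nonneg _) (hC 0 ⟨le_rfl, zero_le_one⟩)
  have key := myKey hn hc hC0 hC
  have hT2nonneg : 0 ≤ ∫ r in (0:ℝ)..1,
      r ^ (-(2*(n:ℤ))-1) * (∫ s in (0:ℝ)..r, s^(n+1) * h s)^2 :=
    intervalIntegral.integral_nonneg zero_le_one
      (fun u hu => mul_nonneg (zpow_nonneg hu.1 _) (sq_nonneg _))
  have hT1nonneg : 0 ≤ (1/(2*(n:ℝ))) * (∫ r in (0:ℝ)..1, h r * r^(n+1))^2 := by positivity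
  refine ⟨key, by rw [key]; linarith, ?_⟩
  rintro ⟨r₀, hr₀, hne⟩
  rw [key]
  rcases lt_or_eq_of_le (add_nonneg hT1nonneg hT2nonneg) with hpos | heq
  · exact hpos
  exfalso
  have hT2zero : (∫ r in (0:ℝ)..1,
      r ^ (-(2*(n:ℤ))-1) * (∫ s in (0:ℝ)..r, s^(n+1) * h s)^2) = 0 := by linarith
  set g := fun r : ℝ => r ^ (-(2*(n:ℤ))-1) * (∫ s in (0:ℝ)..r, s^(n+1) * h s)^2 with hgdef
  have hvint := myint_v (n := n) hc hC0 hC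
  rw [intervalIntegrable_iff_integrableOn_Ioc_of_le zero_le_one] at hvint
  have hgint : IntegrableOn g (Ioc 0 1) volume := by
    apply hvint.congr_fun _ measurableSet_Ioc
    intro x hx
    have hzz : (-(2*(n:ℤ))-1) = -((2*n+1 : ℕ) : ℤ) := by push_cast; ring
    show _ = x ^ (-(2*(n:ℤ))-1) * (∫ s in (0:ℝ)..x, s^(n+1) * h s)^2
    rw [hzz, zpow_neg, zpow_natCast, inv_mul_eq_div]
  have hnn : (0:ℝ→ℝ) ≤ᵐ[volume.restrict (Ioc (0:ℝ) 1)] g := by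
    rw [Filter.EventuallyLE, ae_restrict_iff' measurableSet_Ioc]
    refine Filter.Eventually.of_forall (fun x hx => ?_)
    simpa using mul_nonneg (zpow_nonneg hx.1.le (-(2*(n:ℤ))-1)) (sq_nonneg _)
  rw [intervalIntegral.integral_of_le zero_le_one] at hT2zero
  have hae := (setIntegral_eq_zero_iff_of_nonneg_ae hnn hgint).mp hT2zero
  have hz0 : (volume.restrict (Ioc (0:ℝ) 1)) {x | g x ≠ 0} = 0 := by
    rw [Filter.EventuallyEq, ae_iff] at hae
    simpa using hae
  have hFzero : ∀ x ∈ Ioo (0:ℝ) 1, (∫ s in (0:ℝ)..x, s^(n+1) * h s) = 0 := by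
    intro x hx
    by_contra hFx
    have hcx : ContinuousAt (fun r => ∫ s in (0:ℝ)..r, s^(n+1) * h s) x :=
      (myF_cont hc).continuousAt (Icc_mem_nhds hx.1 hx.2)
    obtain ⟨ε, hε, hball⟩ := Metric.eventually_nhds_iff.mp (hcx.eventually_ne hFx)
    set a := max (x - ε/2) (x/2) with ha
    set b := min (x + ε/2) ((x+1)/2) with hb
    have hax : a < x := by
      apply max_lt
      · linarith
      · linarith [hx.1]
    have hxb : x < b := by
      apply lt_min
      · linarith
      · linarith [hx.2]
    have hsub : Ioo a b ⊆ {y | g y ≠ 0} ∩ Ioc 0 1 := by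
      intro y hy
      have hy0 : 0 < y :=
        lt_of_lt_of_le (by linarith [hx.1] : (0:ℝ) < x/2) ((le_max_right _ _).trans hy.1.le)
      have hy1 : y ≤ 1 := by
        have h1 : b ≤ (x+1)/2 := min_le_right _ _
        have h2 := hy.2
        linarith [hx.2]
      have hdist : dist y x < ε := by
        rw [Real.dist_eq, abs_sub_lt_iff]
        constructor
        · have : b ≤ x + ε/2 := min_le_left _ _
          linarith [hy.2]
        · have : x - ε/2 ≤ a := le_max_left _ _
          linarith [hy.1]
      refine ⟨?_, hy0, hy1⟩
      have hFy := hball hdist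
      exact mul_ne_zero (ne_of_gt (zpow_pos hy0 _)) (pow_ne_zero 2 hFy)
    have hsub1 : Ioo a b ⊆ {y | g y ≠ 0} := hsub.trans inter_subset_left
    have hsub2 : Ioo a b ⊆ Ioc 0 1 := hsub.trans inter_subset_right
    have hres : (volume.restrict (Ioc (0:ℝ) 1)) (Ioo a b) = volume (Ioo a b) := by
      rw [Measure.restrict_apply measurableSet_Ioo, inter_eq_self_of_subset_left hsub2]
    have hzero : volume (Ioo a b) = 0 := by
      rw [← hres]
      exact le_antisymm (hz0 ▸ measure_mono hsub1) zero_le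
    exact (isOpen_Ioo.measure_pos volume (nonempty_Ioo.mpr (hax.trans hxb))).ne' hzero
  have hhzero : ∀ x ∈ Ioo (0:ℝ) 1, h x = 0 := by
    intro x hx
    have hd1 := myF_deriv (n := n) hc x hx
    have hd0 : HasDerivAt (fun r => ∫ s in (0:ℝ)..r, s^(n+1) * h s) 0 x := by
      apply HasDerivAt.congr_of_eventuallyEq (hasDerivAt_const x (0:ℝ))
      exact Filter.eventuallyEq_of_mem (isOpen_Ioo.mem_nhds hx) (fun y hy => hFzero y hy)
    have huniq := hd1.unique hd0
    have hxn : x^(n+1) ≠ 0 := pow_ne_zero _ (ne_of_gt hx.1)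
    rcases mul_eq_zero.mp huniq with h' | h'
    · exact absurd h' hxn
    · exact h'
  have hfinal : h r₀ = 0 := by
    rcases eq_or_lt_of_le hr₀.1 with h0 | h0
    · haveI hnb : (nhdsWithin (0:ℝ) (Ioo (0:ℝ) 1)).NeBot := by
        apply mem_closure_iff_nhdsWithin_neBot.mp
        rw [closure_Ioo (by norm_num : (0:ℝ) ≠ 1)]
        exact ⟨le_rfl, zero_le_one⟩
      have t1 : Filter.Tendsto h (nhdsWithin (0:ℝ) (Ioo (0:ℝ) 1)) (nhds (h 0)) :=
        (hc 0 ⟨le_rfl, zero_le_one⟩).mono Ioo_subset_Icc_self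
      have t2 : Filter.Tendsto h (nhdsWithin (0:ℝ) (Ioo (0:ℝ) 1)) (nhds 0) :=
        Filter.Tendsto.congr'
          (Filter.eventuallyEq_of_mem self_mem_nhdsWithin
            (fun y hy => (hhzero y hy).symm)) tendsto_const_nhds
      rw [← h0]
      exact tendsto_nhds_unique t1 t2
    rcases eq_or_lt_of_le hr₀.2 with h1 | h1
    · haveI hnb : (nhdsWithin (1:ℝ) (Ioo (0:ℝ) 1)).NeBot := by
        apply mem_closure_iff_nhdsWithin_neBot.mp
        rw [closure_Ioo (by norm_num : (0:ℝ) ≠ 1)]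
        exact ⟨zero_le_one, le_rfl⟩
      have t1 : Filter.Tendsto h (nhdsWithin (1:ℝ) (Ioo (0:ℝ) 1)) (nhds (h 1)) :=
        (hc 1 ⟨zero_le_one, le_rfl⟩).mono Ioo_subset_Icc_self
      have t2 : Filter.Tendsto h (nhdsWithin (1:ℝ) (Ioo (0:ℝ) 1)) (nhds 0) :=
        Filter.Tendsto.congr'
          (Filter.eventuallyEq_of_mem self_mem_nhdsWithin
            (fun y hy => (hhzero y hy).symm)) tendsto_const_nhds
      rw [h1]
      exact tendsto_nhds_unique t1 t2
    · exact hhzero r₀ ⟨h0, h1⟩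
  exact hne hfinal
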